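/- arXiv:1804.00565 — 2 statements merged into one kernel-verified Lean document; each statement's English description precedes it below -/
import Mathlib

section
/- Every PMV-algebra is an MVW-rig. Precisely: let A be a PMV-algebra (with associative, commutative product). Then for all a, b, c ∈ A: a·0 = 0, a·(b ⊕ c) ≤ a·b ⊕ a·c, and a·b ⊖ a·c ≤ a·(b ⊖ c). -/
/-- The data of an MV-algebra: a binary sum, a negation and a zero. -/
structure MVData (A : Type*) where
  add : A → A → A
  neg : A → A
  zero : A

namespace MVData

variable {A : Type*} (m : MVData A)

/-- The top element `u = ¬0`. -/
def unit : A := m.neg m.zero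

/-- Truncated difference `x ⊖ y = ¬(¬x ⊕ y)`. -/
def ominus (x y : A) : A := m.neg (m.add (m.neg x) y)

/-- The product `x ⊙ y = ¬(¬x ⊕ ¬y)`. -/
def odot (x y : A) : A := m.neg (m.add (m.neg x) (m.neg y))

/-- The MV order: `x ≤ y` iff `x ⊖ y = 0`. -/
def le (x y : A) : Prop := m.ominus x y = m.zero

/-- The lattice join `x ∨ y = (x ⊖ y) ⊕ y`. -/
def sup (x y : A) : A := m.add (m.ominus x y) y

/-- The lattice meet `x ∧ y = ¬(¬x ∨ ¬y)`. -/
def inf (x y : A) : A := m.neg (m.sup (m.neg x) (m.neg y))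

/-- The MV-algebra axioms: `(A, ⊕, 0)` is a commutative monoid and `¬` satisfies
`¬¬x = x`, `x ⊕ ¬0 = ¬0` and `¬(¬x ⊕ y) ⊕ y = ¬(¬y ⊕ x) ⊕ x`. -/
structure IsMV : Prop where
  add_assoc : ∀ x y z : A, m.add (m.add x y) z = m.add x (m.add y z)
  add_comm : ∀ x y : A, m.add x y = m.add y x
  add_zero : ∀ x : A, m.add x m.zero = x
  neg_neg : ∀ x : A, m.neg (m.neg x) = x
  add_unit : ∀ x : A, m.add x (m.neg m.zero) = m.neg m.zero
  lukasiewicz : ∀ x y : A,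
    m.add (m.neg (m.add (m.neg x) y)) y = m.add (m.neg (m.add (m.neg y) x)) x

end MVData
namespace MVData

variable {A : Type*} {m : MVData A}

theorem IsMV.add_left_comm (h : m.IsMV) (x y z : A) :
    m.add x (m.add y z) = m.add y (m.add x z) := by
  rw [← h.add_assoc, h.add_comm x y, h.add_assoc]

theorem IsMV.zero_add (h : m.IsMV) (x : A) : m.add m.zero x = x := by
  rw [h.add_comm, h.add_zero]

theorem IsMV.unit_add (h : m.IsMV) (x : A) :
    m.add (m.neg m.zero) x = m.neg m.zero := by
  rw [h.add_comm, h.add_unit]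

theorem IsMV.neg_unit (h : m.IsMV) : m.neg (m.neg m.zero) = m.zero := h.neg_neg _

theorem IsMV.neg_add_self (h : m.IsMV) (x : A) :
    m.add (m.neg x) x = m.neg m.zero := by
  have hl := h.lukasiewicz x (m.neg m.zero)
  rw [h.add_unit (m.neg x), h.neg_unit, h.zero_add, h.zero_add] at hl
  exact hl.symm

theorem IsMV.le_iff (h : m.IsMV) {x y : A} :
    m.le x y ↔ m.add (m.neg x) y = m.neg m.zero := by
  unfold MVData.le MVData.ominus
  constructor
  · intro hh
    have := congrArg m.neg hh
    rwa [h.neg_neg] at this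
  · intro hh
    rw [hh, h.neg_unit]

theorem IsMV.le_of_eq_add (h : m.IsMV) {x y : A} (z : A) (hz : m.add z x = y) :
    m.le x y := by
  rw [h.le_iff, ← hz, h.add_left_comm (m.neg x) z x, h.neg_add_self, h.add_unit]

theorem IsMV.add_ominus_of_le (h : m.IsMV) {x y : A} (hxy : m.le x y) :
    m.add (m.ominus y x) x = y := by
  have hl := h.lukasiewicz x y
  have hx : m.neg (m.add (m.neg x) y) = m.zero := hxy
  rw [hx, h.zero_add] at hl
  exact hl.symm

theorem IsMV.le_trans (h : m.IsMV) {x y z : A} (h1 : m.le x y) (h2 : m.le y z) :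
    m.le x z := by
  have e1 := h.add_ominus_of_le h1
  have e2 := h.add_ominus_of_le h2
  exact h.le_of_eq_add (m.add (m.ominus z y) (m.ominus y x))
    (by rw [h.add_assoc, e1, e2])

theorem IsMV.add_le_add_left (h : m.IsMV) {x y : A} (hxy : m.le x y) (w : A) :
    m.le (m.add w x) (m.add w y) := by
  apply h.le_of_eq_add (m.ominus y x)
  rw [h.add_left_comm, h.add_ominus_of_le hxy]

theorem IsMV.ominus_le_of_le_add (h : m.IsMV) {x y z : A} (hx : m.le x (m.add y z)) :
    m.le (m.ominus x z) y := by
  rw [h.le_iff] at hx ⊢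
  unfold MVData.ominus
  rw [h.neg_neg, h.add_assoc, h.add_comm z y]
  exact hx

theorem IsMV.ominus_add_le (h : m.IsMV) (b c : A) :
    m.le (m.ominus (m.add b c) b) c :=
  h.ominus_le_of_le_add (by rw [h.le_iff, h.add_comm c b, h.neg_add_self])

theorem IsMV.odot_comm (h : m.IsMV) (x y : A) : m.odot x y = m.odot y x := by
  unfold MVData.odot
  rw [h.add_comm]

theorem IsMV.odot_assoc (h : m.IsMV) (x y z : A) :
    m.odot (m.odot x y) z = m.odot x (m.odot y z) := by
  unfold MVData.odot
  rw [h.neg_neg, h.neg_neg, h.add_assoc]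

theorem IsMV.zero_odot (h : m.IsMV) (x : A) : m.odot m.zero x = m.zero := by
  unfold MVData.odot
  rw [h.unit_add, h.neg_unit]

theorem IsMV.odot_zero (h : m.IsMV) (x : A) : m.odot x m.zero = m.zero := by
  rw [h.odot_comm, h.zero_odot]

theorem IsMV.odot_neg_self (h : m.IsMV) (x : A) : m.odot x (m.neg x) = m.zero := by
  unfold MVData.odot
  rw [h.neg_neg, h.neg_add_self, h.neg_unit]

theorem IsMV.ominus_eq_odot (h : m.IsMV) (x y : A) :
    m.ominus x y = m.odot x (m.neg y) := by
  unfold MVData.ominus MVData.odot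
  rw [h.neg_neg]

theorem IsMV.odot_ominus_self (h : m.IsMV) (x y : A) :
    m.odot (m.ominus y x) x = m.zero := by
  rw [h.ominus_eq_odot, h.odot_assoc, h.odot_comm (m.neg x) x, h.odot_neg_self,
    h.odot_zero]

theorem IsMV.eq_zero_of_idem_of_sq (h : m.IsMV) {x : A}
    (h1 : m.add x x = x) (h2 : m.odot x x = m.zero) : x = m.zero := by
  have h2' : m.neg (m.add (m.neg x) (m.neg x)) = m.zero := h2
  have hl := h.lukasiewicz x (m.neg x)
  rw [h2', h.zero_add, h.neg_neg, h1, h.neg_add_self] at hl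
  have := congrArg m.neg hl
  rwa [h.neg_neg, h.neg_unit] at this

end MVData

/-- Every PMV-algebra is an MVW-rig: if `A` is an MV-algebra with an
associative commutative product such that `a ⊙ b = 0` implies `a·c ⊙ b·c = 0` and
`a ⊙ b = 0` implies `c·(a ⊕ b) = c·a ⊕ c·b`, then for all `a b c`: `a·0 = 0`,
`a·(b ⊕ c) ≤ a·b ⊕ a·c`, and `a·b ⊖ a·c ≤ a·(b ⊖ c)`. -/
theorem pmv_is_mvwrig {A : Type*} (m : MVData A) (hmv : m.IsMV)
    (mul : A → A → A)
    (mul_assoc : ∀ a b c : A, mul (mul a b) c = mul a (mul b c))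
    (mul_comm : ∀ a b : A, mul a b = mul b a)
    (pmv1 : ∀ a b c : A, m.odot a b = m.zero → m.odot (mul a c) (mul b c) = m.zero)
    (pmv2 : ∀ a b c : A, m.odot a b = m.zero →
      mul c (m.add a b) = m.add (mul c a) (mul c b)) :
    ∀ a b c : A,
      mul a m.zero = m.zero ∧
      m.le (mul a (m.add b c)) (m.add (mul a b) (mul a c)) ∧
      m.le (m.ominus (mul a b) (mul a c)) (mul a (m.ominus b c)) := by

  have mul_mono : ∀ w x y : A, m.le x y → m.le (mul w x) (mul w y) := by
    intro w x y hxy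
    have e : m.add (m.ominus y x) x = y := hmv.add_ominus_of_le hxy
    have hd := pmv2 (m.ominus y x) x w (hmv.odot_ominus_self x y)
    rw [e] at hd
    exact hmv.le_of_eq_add (mul w (m.ominus y x)) hd.symm
  have subdist : ∀ a b c : A,
      m.le (mul a (m.add b c)) (m.add (mul a b) (mul a c)) := by
    intro a b c
    have hbd : m.odot b (m.ominus (m.add b c) b) = m.zero := by
      rw [hmv.odot_comm, hmv.odot_ominus_self]
    have hsum : m.add b (m.ominus (m.add b c) b) = m.add b c := by
      rw [hmv.add_comm, hmv.add_ominus_of_le (hmv.le_of_eq_add c (hmv.add_comm c b))]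
    have hdist := pmv2 b (m.ominus (m.add b c) b) a hbd
    rw [hsum] at hdist
    rw [hdist]
    exact hmv.add_le_add_left (mul_mono a _ _ (hmv.ominus_add_le b c)) (mul a b)
  intro a b c
  refine ⟨?_, subdist a b c, ?_⟩
  · have h00 : m.odot m.zero m.zero = m.zero := hmv.zero_odot m.zero
    have hidem := pmv2 m.zero m.zero a h00
    rw [hmv.add_zero] at hidem
    have hsq := pmv1 m.zero m.zero a h00
    rw [mul_comm m.zero a] at hsq
    exact hmv.eq_zero_of_idem_of_sq hidem.symm hsq
  · have hb : m.le b (m.add (m.ominus b c) c) := by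
      rw [hmv.le_iff]
      unfold MVData.ominus
      rw [hmv.add_left_comm (m.neg b) (m.neg (m.add (m.neg b) c)) c, hmv.neg_add_self]
    exact hmv.ominus_le_of_le_add
      (hmv.le_trans (mul_mono a _ _ hb) (subdist a (m.ominus b c) c))
end

section
/- Let A be a commutative MVW-rig and I an ideal of the MVW-rig A. Define a ≡_I b if and only if (a ⊖ b) ⊕ (b ⊖ a) ∈ I. If a ≡_I b and c ≡_I d, then a·c ≡_I b·d; that is, the congruence associated with an MVW-rig ideal is compatible with the product. -/
section Aux
variable {A : Type*} (m : MVData A) (hmv : m.IsMV)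

include hmv

lemma mv_neg_add_self (x : A) : m.add (m.neg x) x = m.neg m.zero := by
  have h := hmv.lukasiewicz x (m.neg m.zero)
  rw [hmv.add_unit (m.neg x)] at h
  rw [hmv.neg_neg] at h
  rw [hmv.add_comm m.zero (m.neg m.zero), hmv.add_zero, hmv.add_comm m.zero x,
    hmv.add_zero] at h
  exact h.symm

lemma mv_le_refl (x : A) : m.le x x := by
  unfold MVData.le MVData.ominus
  rw [mv_neg_add_self m hmv, hmv.neg_neg]

lemma mv_le_iff {x y : A} : m.le x y ↔ m.add (m.neg x) y = m.neg m.zero := by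
  unfold MVData.le MVData.ominus
  constructor
  · intro h
    have := congrArg m.neg h
    rwa [hmv.neg_neg] at this
  · intro h
    rw [h, hmv.neg_neg]

lemma mv_le_add_self (x t : A) : m.le x (m.add x t) := by
  rw [mv_le_iff m hmv, ← hmv.add_assoc, mv_neg_add_self m hmv,
    hmv.add_comm (m.neg m.zero) t, hmv.add_unit]

lemma mv_le_add_self' (t x : A) : m.le t (m.add x t) := by
  rw [hmv.add_comm x t]
  exact mv_le_add_self m hmv t x

lemma mv_eq_add_of_le {x y : A} (h : m.le x y) : y = m.add x (m.ominus y x) := by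
  have hl := hmv.lukasiewicz x y
  unfold MVData.le MVData.ominus at *
  rw [h, hmv.add_comm m.zero y, hmv.add_zero] at hl
  rw [hmv.add_comm x (m.neg (m.add (m.neg y) x))]
  exact hl

lemma mv_le_trans {x y z : A} (hxy : m.le x y) (hyz : m.le y z) : m.le x z := by
  have h2 := mv_eq_add_of_le m hmv hyz
  rw [h2, mv_eq_add_of_le m hmv hxy, hmv.add_assoc]
  exact mv_le_add_self m hmv _ _

lemma mv_add_le_add_left {x y : A} (t : A) (h : m.le x y) :
    m.le (m.add t x) (m.add t y) := by
  rw [mv_eq_add_of_le m hmv h, ← hmv.add_assoc]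
  exact mv_le_add_self m hmv _ _

lemma mv_add_le_add {x x' y y' : A} (h1 : m.le x x') (h2 : m.le y y') :
    m.le (m.add x y) (m.add x' y') := by
  apply mv_le_trans m hmv (mv_add_le_add_left m hmv x h2)
  rw [hmv.add_comm x y', hmv.add_comm x' y']
  exact mv_add_le_add_left m hmv y' h1

lemma mv_ominus_le_iff {x z c : A} : m.le (m.ominus x z) c ↔ m.le x (m.add z c) := by
  rw [mv_le_iff m hmv, mv_le_iff m hmv]
  unfold MVData.ominus
  rw [hmv.neg_neg, hmv.add_assoc]

lemma mv_le_ominus_add (x y : A) : m.le x (m.add (m.ominus x y) y) := by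
  unfold MVData.ominus
  rw [hmv.lukasiewicz, hmv.add_comm (m.neg (m.add (m.neg y) x)) x]
  exact mv_le_add_self m hmv _ _

lemma mv_triangle (x y z : A) :
    m.le (m.ominus x z) (m.add (m.ominus x y) (m.ominus y z)) := by
  rw [mv_ominus_le_iff m hmv]
  apply mv_le_trans m hmv (mv_le_ominus_add m hmv x y)
  apply mv_le_trans m hmv
    (mv_add_le_add_left m hmv (m.ominus x y) (mv_le_ominus_add m hmv y z))
  have he : m.add (m.ominus x y) (m.add (m.ominus y z) z)
      = m.add z (m.add (m.ominus x y) (m.ominus y z)) := by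
    rw [← hmv.add_assoc, hmv.add_comm]
  rw [he]
  exact mv_le_refl m hmv _

end Aux

/-- In a commutative MVW-rig `A` with an MVW-rig ideal `I`
(an MV-ideal that is absorbent), the congruence `a ≡_I b ↔ (a ⊖ b) ⊕ (b ⊖ a) ∈ I`
is compatible with the product: `a ≡_I b` and `c ≡_I d` imply `a·c ≡_I b·d`. -/
theorem congruence_compatible_with_product {A : Type*} (m : MVData A) (hmv : m.IsMV)
    (mul : A → A → A)
    (mul_assoc : ∀ a b c : A, mul (mul a b) c = mul a (mul b c))
    (mul_comm : ∀ a b : A, mul a b = mul b a)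
    (mul_zero : ∀ a : A, mul a m.zero = m.zero)
    (mul_add_le : ∀ a b c : A, m.le (mul a (m.add b c)) (m.add (mul a b) (mul a c)))
    (ominus_mul_le : ∀ a b c : A,
      m.le (m.ominus (mul a b) (mul a c)) (mul a (m.ominus b c)))
    (I : Set A) (hne : I.Nonempty)
    (hdown : ∀ a b : A, m.le a b → b ∈ I → a ∈ I)
    (haddI : ∀ a b : A, a ∈ I → b ∈ I → m.add a b ∈ I)
    (habs : ∀ a b : A, a ∈ I → mul a b ∈ I)
    (a b c d : A)
    (hab : m.add (m.ominus a b) (m.ominus b a) ∈ I)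
    (hcd : m.add (m.ominus c d) (m.ominus d c) ∈ I) :
    m.add (m.ominus (mul a c) (mul b d)) (m.ominus (mul b d) (mul a c)) ∈ I := by
  have hab1 : m.ominus a b ∈ I := hdown _ _ (mv_le_add_self m hmv _ _) hab
  have hba1 : m.ominus b a ∈ I := hdown _ _ (mv_le_add_self' m hmv _ _) hab
  have hcd1 : m.ominus c d ∈ I := hdown _ _ (mv_le_add_self m hmv _ _) hcd
  have hdc1 : m.ominus d c ∈ I := hdown _ _ (mv_le_add_self' m hmv _ _) hcd
  have h1 : m.le (m.ominus (mul a c) (mul b c)) (mul c (m.ominus a b)) := by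
    have := ominus_mul_le c a b
    rwa [mul_comm c a, mul_comm c b] at this
  have h2 := ominus_mul_le b c d
  have h1' : m.le (m.ominus (mul b c) (mul a c)) (mul c (m.ominus b a)) := by
    have := ominus_mul_le c b a
    rwa [mul_comm c b, mul_comm c a] at this
  have h2' := ominus_mul_le b d c
  have m1 : mul c (m.ominus a b) ∈ I := by
    rw [mul_comm]; exact habs _ _ hab1
  have m2 : mul b (m.ominus c d) ∈ I := by
    rw [mul_comm]; exact habs _ _ hcd1
  have m1' : mul c (m.ominus b a) ∈ I := by
    rw [mul_comm]; exact habs _ _ hba1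
  have m2' : mul b (m.ominus d c) ∈ I := by
    rw [mul_comm]; exact habs _ _ hdc1
  have k1 : m.ominus (mul a c) (mul b d) ∈ I := by
    refine hdown _ _ ?_ (haddI _ _ m1 m2)
    exact mv_le_trans m hmv (mv_triangle m hmv _ (mul b c) _)
      (mv_add_le_add m hmv h1 h2)
  have k2 : m.ominus (mul b d) (mul a c) ∈ I := by
    refine hdown _ _ ?_ (haddI _ _ m2' m1')
    exact mv_le_trans m hmv (mv_triangle m hmv _ (mul b c) _)
      (mv_add_le_add m hmv h2' h1')
  exact haddI _ _ k1 k2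
end
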